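/- Let d, n ≥ 1, σ > 0, and let A : I → ℝ^{d×d} be continuous on an open interval I ⊆ ℝ with A(t) skew-symmetric for every t. Suppose q_i, p_i : I → ℝ^d (i = 1,…,n) are differentiable and satisfy q_i'(t) = A(t) q_i(t) + ∑_{j=1}^n exp(−‖q_i(t) − q_j(t)‖²/(2σ²)) p_j(t) and p_i'(t) = A(t) p_i(t) + (1/σ²) ∑_{j=1}^n exp(−‖q_i(t) − q_j(t)‖²/(2σ²)) ⟨p_i(t), p_j(t)⟩ (q_i(t) − q_j(t)). If the angular momentum matrix M(t) = ∑_{i=1}^n ( p_i(t) q_i(t)ᵀ − q_i(t) p_i(t)ᵀ ) vanishes at some t₀ ∈ I, then M(t) = 0 for all t ∈ I. -/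

import Mathlib

open Matrix

namespace RotMom
variable {d n : ℕ}

lemma vmv_add_left (u v w : Fin d → ℝ) :
    vecMulVec (u + v) w = vecMulVec u w + vecMulVec v w := by
  ext a b; simp [vecMulVec_apply]; ring

lemma vmv_add_right (u v w : Fin d → ℝ) :
    vecMulVec u (v + w) = vecMulVec u v + vecMulVec u w := by
  ext a b; simp [vecMulVec_apply]; ring

lemma vmv_smul_left (c : ℝ) (u w : Fin d → ℝ) :
    vecMulVec (c • u) w = c • vecMulVec u w := by
  ext a b; simp [vecMulVec_apply]; ring

lemma vmv_smul_right (c : ℝ) (u w : Fin d → ℝ) :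
    vecMulVec u (c • w) = c • vecMulVec u w := by
  ext a b; simp [vecMulVec_apply]; ring

lemma vmv_sub_left (u v w : Fin d → ℝ) :
    vecMulVec (u - v) w = vecMulVec u w - vecMulVec v w := by
  ext a b; simp [vecMulVec_apply]; ring

lemma vmv_sub_right (u v w : Fin d → ℝ) :
    vecMulVec u (v - w) = vecMulVec u v - vecMulVec u w := by
  ext a b; simp [vecMulVec_apply]; ring

lemma vmv_sum_left (f : Fin n → Fin d → ℝ) (w : Fin d → ℝ) :
    vecMulVec (∑ j, f j) w = ∑ j, vecMulVec (f j) w := by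
  ext a b; simp [vecMulVec_apply, Finset.sum_apply, Matrix.sum_apply, Finset.sum_mul]

lemma vmv_sum_right (u : Fin d → ℝ) (f : Fin n → Fin d → ℝ) :
    vecMulVec u (∑ j, f j) = ∑ j, vecMulVec u (f j) := by
  ext a b; simp [vecMulVec_apply, Finset.sum_apply, Matrix.sum_apply, Finset.mul_sum]

lemma vmv_mulVec_left (A : Matrix (Fin d) (Fin d) ℝ) (u w : Fin d → ℝ) :
    vecMulVec (A.mulVec u) w = A * vecMulVec u w := by
  ext a b
  simp [vecMulVec_apply, mul_apply, mulVec, dotProduct, Finset.sum_mul, mul_assoc]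

lemma vmv_mulVec_right (A : Matrix (Fin d) (Fin d) ℝ) (u w : Fin d → ℝ) :
    vecMulVec u (A.mulVec w) = vecMulVec u w * Aᵀ := by
  ext a b
  simp [vecMulVec_apply, mul_apply, mulVec, dotProduct, transpose_apply, Finset.mul_sum]
  exact Finset.sum_congr rfl fun c _ => by ring

lemma sum_antisymm {E : Type*} [AddCommGroup E] [Module ℝ E]
    (F : Fin n → Fin n → E) (h : ∀ i j, F i j = -F j i) :
    ∑ i, ∑ j, F i j = 0 := by
  have hS : (∑ i, ∑ j, F i j) = -∑ i, ∑ j, F i j := by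
    conv_lhs => rw [Finset.sum_comm]
    rw [← Finset.sum_neg_distrib]
    refine Finset.sum_congr rfl fun j _ => ?_
    rw [← Finset.sum_neg_distrib]
    exact Finset.sum_congr rfl fun i _ => h i j
  have h2 : (2 : ℝ) • (∑ i, ∑ j, F i j) = 0 := by
    rw [two_smul]
    exact eq_neg_iff_add_eq_zero.mp hS ▸ (by rw [eq_neg_iff_add_eq_zero.mp hS])
  have := smul_eq_zero.mp h2
  simpa using this

lemma key (A : Matrix (Fin d) (Fin d) ℝ) (hA : Aᵀ = -A)
    (P Q : Fin n → Fin d → ℝ) (e g : Fin n → Fin n → ℝ) (c : ℝ)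
    (he : ∀ i j, e i j = e j i) (hg : ∀ i j, g i j = g j i) :
    (∑ i, (vecMulVec (A.mulVec (P i) + c • ∑ j, g i j • (Q i - Q j)) (Q i)
      + vecMulVec (P i) (A.mulVec (Q i) + ∑ j, e i j • P j)
      - (vecMulVec (A.mulVec (Q i) + ∑ j, e i j • P j) (P i)
      + vecMulVec (Q i) (A.mulVec (P i) + c • ∑ j, g i j • (Q i - Q j)))))
    = A * (∑ i, (vecMulVec (P i) (Q i) - vecMulVec (Q i) (P i)))
      - (∑ i, (vecMulVec (P i) (Q i) - vecMulVec (Q i) (P i))) * A := by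
  have expand : ∀ i,
      (vecMulVec (A.mulVec (P i) + c • ∑ j, g i j • (Q i - Q j)) (Q i)
      + vecMulVec (P i) (A.mulVec (Q i) + ∑ j, e i j • P j)
      - (vecMulVec (A.mulVec (Q i) + ∑ j, e i j • P j) (P i)
      + vecMulVec (Q i) (A.mulVec (P i) + c • ∑ j, g i j • (Q i - Q j)))) =
      (A * (vecMulVec (P i) (Q i) - vecMulVec (Q i) (P i))
        - (vecMulVec (P i) (Q i) - vecMulVec (Q i) (P i)) * A)
      + (∑ j, e i j • (vecMulVec (P i) (P j) - vecMulVec (P j) (P i)))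
      + (∑ j, (c * g i j) •
          (vecMulVec (Q i - Q j) (Q i) - vecMulVec (Q i) (Q i - Q j))) := by
    intro i
    simp only [vmv_add_left, vmv_add_right, vmv_sub_left, vmv_sub_right, vmv_sum_left, vmv_sum_right, vmv_smul_left,
      vmv_smul_right, vmv_mulVec_left, vmv_mulVec_right, hA, Matrix.mul_neg, mul_sub,
      sub_mul, smul_sub, Finset.smul_sum, mul_smul, Finset.sum_sub_distrib]
    abel
  rw [Finset.sum_congr rfl fun i _ => expand i]
  rw [Finset.sum_add_distrib, Finset.sum_add_distrib]
  have hY : (∑ i, ∑ j, e i j • (vecMulVec (P i) (P j) - vecMulVec (P j) (P i))) = 0 := by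
    refine sum_antisymm _ fun i j => ?_
    rw [he i j, ← smul_neg, neg_sub]
  have hZ : (∑ i, ∑ j, (c * g i j) •
      (vecMulVec (Q i - Q j) (Q i) - vecMulVec (Q i) (Q i - Q j))) = 0 := by
    refine sum_antisymm _ fun i j => ?_
    rw [hg i j, ← smul_neg]
    congr 1
    ext a b
    simp [vecMulVec_apply]
    ring
  rw [hY, hZ, add_zero, add_zero, Finset.sum_sub_distrib, ← Finset.mul_sum, ← Finset.sum_mul]

end RotMom


section Main

attribute [local instance] Matrix.normedAddCommGroup Matrix.normedSpace

open RotMom Set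

lemma RotMom.norm_matmul_le {d : ℕ} (X Y : Matrix (Fin d) (Fin d) ℝ) :
    ‖X * Y‖ ≤ d * ‖X‖ * ‖Y‖ := by
  refine (Matrix.norm_le_iff (by positivity)).mpr fun a b => ?_
  calc ‖(X * Y) a b‖ = ‖∑ c, X a c * Y c b‖ := by rw [Matrix.mul_apply]
    _ ≤ ∑ c, ‖X a c * Y c b‖ := norm_sum_le _ _
    _ ≤ ∑ _c : Fin d, ‖X‖ * ‖Y‖ := by
        refine Finset.sum_le_sum fun c _ => ?_
        rw [norm_mul]
        exact mul_le_mul (Matrix.norm_entry_le_entrywise_sup_norm X)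
          (Matrix.norm_entry_le_entrywise_sup_norm Y) (norm_nonneg _) (norm_nonneg _)
    _ = d * ‖X‖ * ‖Y‖ := by simp [Finset.sum_const, mul_assoc]

/-- The zero level set of the rotation momentum map `μ_A(q,p) = ∑ᵢ (pᵢ qᵢᵀ − qᵢ pᵢᵀ)` is
preserved by the rotation-coupled landmark Hamiltonian flow: if the angular momentum matrix
vanishes at some `t₀`, it vanishes for all times. -/
theorem rotation_momentum_zero_preserved {d n : ℕ} (hd : 1 ≤ d) (hn : 1 ≤ n)
    (σ : ℝ) (hσ : 0 < σ) (a b : ℝ)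
    (A : ℝ → Matrix (Fin d) (Fin d) ℝ)
    (hAcont : ContinuousOn A (Set.Ioo a b))
    (hAskew : ∀ t ∈ Set.Ioo a b, (A t).transpose = -(A t))
    (q p : Fin n → ℝ → (Fin d → ℝ))
    (hq : ∀ t ∈ Set.Ioo a b, ∀ i, HasDerivAt (q i)
      ((A t).mulVec (q i t) +
        ∑ j, Real.exp (-((q i t - q j t) ⬝ᵥ (q i t - q j t)) / (2 * σ ^ 2)) • p j t) t)
    (hp : ∀ t ∈ Set.Ioo a b, ∀ i, HasDerivAt (p i)
      ((A t).mulVec (p i t) + (1 / σ ^ 2) • ∑ j,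
        (Real.exp (-((q i t - q j t) ⬝ᵥ (q i t - q j t)) / (2 * σ ^ 2))
          * (p i t ⬝ᵥ p j t)) • (q i t - q j t)) t)
    (t₀ : ℝ) (ht₀ : t₀ ∈ Set.Ioo a b)
    (h0 : (∑ i, (vecMulVec (p i t₀) (q i t₀) - vecMulVec (q i t₀) (p i t₀))) = 0) :
    ∀ t ∈ Set.Ioo a b,
      (∑ i, (vecMulVec (p i t) (q i t) - vecMulVec (q i t) (p i t))) = 0 := by
  classical
  set e : ℝ → Fin n → Fin n → ℝ := fun t i j =>
    Real.exp (-((q i t - q j t) ⬝ᵥ (q i t - q j t)) / (2 * σ ^ 2)) with he_def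
  set M : ℝ → Matrix (Fin d) (Fin d) ℝ := fun t =>
    ∑ i, (vecMulVec (p i t) (q i t) - vecMulVec (q i t) (p i t)) with hM_def
  -- symmetry of the kernel
  have hesymm : ∀ t i j, e t i j = e t j i := by
    intro t i j
    have hswap : q j t - q i t = -(q i t - q j t) := by abel
    simp only [he_def, hswap, neg_dotProduct, dotProduct_neg, neg_neg]
  -- the derivative of M
  have hM : ∀ t ∈ Set.Ioo a b, HasDerivAt M (A t * M t - M t * A t) t := by
    intro t ht
    set Dq : Fin n → Fin d → ℝ := fun i =>
      (A t).mulVec (q i t) + ∑ j, e t i j • p j t with hDq_def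
    set Dp : Fin n → Fin d → ℝ := fun i =>
      (A t).mulVec (p i t) + (1 / σ ^ 2) • ∑ j, (e t i j * (p i t ⬝ᵥ p j t)) • (q i t - q j t)
      with hDp_def
    have hqe : ∀ i c, HasDerivAt (fun s => q i s c) (Dq i c) t := fun i c =>
      hasDerivAt_pi.mp (hq t ht i) c
    have hpe : ∀ i c, HasDerivAt (fun s => p i s c) (Dp i c) t := fun i c =>
      hasDerivAt_pi.mp (hp t ht i) c
    have hstep : HasDerivAt M
        (∑ i, (vecMulVec (Dp i) (q i t) + vecMulVec (p i t) (Dq i)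
          - (vecMulVec (Dq i) (p i t) + vecMulVec (q i t) (Dp i)))) t := by
      refine hasDerivAt_pi.mpr fun c => hasDerivAt_pi.mpr fun c' => ?_
      have H : HasDerivAt (fun s => ∑ i, (p i s c * q i s c' - q i s c * p i s c'))
          (∑ i, (Dp i c * q i t c' + p i t c * Dq i c'
            - (Dq i c * p i t c' + q i t c * Dp i c'))) t := by
        refine HasDerivAt.fun_sum fun i _ => ?_
        exact ((hpe i c).mul (hqe i c')).sub ((hqe i c).mul (hpe i c'))
      have hfun : (fun s => ∑ i, (p i s c * q i s c' - q i s c * p i s c'))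
          = fun s => M s c c' := by
        funext s
        simp [hM_def, Matrix.sum_apply, Matrix.sub_apply, Matrix.vecMulVec_apply]
      have hval : (∑ i, (Dp i c * q i t c' + p i t c * Dq i c'
            - (Dq i c * p i t c' + q i t c * Dp i c')))
          = (∑ i, (vecMulVec (Dp i) (q i t) + vecMulVec (p i t) (Dq i)
          - (vecMulVec (Dq i) (p i t) + vecMulVec (q i t) (Dp i)))) c c' := by
        simp [Matrix.sum_apply, Matrix.sub_apply, Matrix.add_apply, Matrix.vecMulVec_apply]
      rw [hfun, hval] at H
      exact H
    have hkey : (∑ i, (vecMulVec (Dp i) (q i t) + vecMulVec (p i t) (Dq i)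
          - (vecMulVec (Dq i) (p i t) + vecMulVec (q i t) (Dp i))))
        = A t * M t - M t * A t := by
      have := RotMom.key (A t) (hAskew t ht) (fun i => p i t) (fun i => q i t)
        (fun i j => e t i j) (fun i j => e t i j * (p i t ⬝ᵥ p j t)) (1 / σ ^ 2)
        (fun i j => hesymm t i j)
        (fun i j => by
          show e t i j * (p i t ⬝ᵥ p j t) = e t j i * (p j t ⬝ᵥ p i t)
          rw [hesymm t i j, dotProduct_comm])
      simpa [hDq_def, hDp_def, hM_def, add_comm] using this
    rw [hkey] at hstep
    exact hstep
  -- uniqueness of the zero solution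
  obtain ⟨hat₀, ht₀b⟩ := ht₀
  intro t₁ ht₁
  obtain ⟨hat₁, ht₁b⟩ := ht₁
  set u : ℝ := (a + min t₀ t₁) / 2 with hu_def
  set w : ℝ := (max t₀ t₁ + b) / 2 with hw_def
  have hmin : a < min t₀ t₁ := lt_min hat₀ hat₁
  have hmax : max t₀ t₁ < b := max_lt ht₀b ht₁b
  have hu0 : u < t₀ := by have := min_le_left t₀ t₁; simp only [hu_def]; linarith
  have hu1 : u < t₁ := by have := min_le_right t₀ t₁; simp only [hu_def]; linarith
  have hw0 : t₀ < w := by have := le_max_left t₀ t₁; simp only [hw_def]; linarith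
  have hw1 : t₁ < w := by have := le_max_right t₀ t₁; simp only [hw_def]; linarith
  have hau : a < u := by simp only [hu_def]; linarith
  have hwb : w < b := by simp only [hw_def]; linarith
  have huw : u < w := lt_trans hu0 hw0
  have hsub : Set.Icc u w ⊆ Set.Ioo a b := fun x hx =>
    ⟨lt_of_lt_of_le hau hx.1, lt_of_le_of_lt hx.2 hwb⟩
  set cl : ℝ → ℝ := fun s => max u (min s w) with hcl_def
  have hcl_mem : ∀ s, cl s ∈ Set.Icc u w :=
    fun s => ⟨le_max_left _ _, max_le huw.le (min_le_right _ _)⟩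
  have hcl_eq : ∀ s ∈ Set.Icc u w, cl s = s := by
    intro s hs
    simp only [hcl_def]
    rw [min_eq_left hs.2, max_eq_right hs.1]
  have hcl_cont : Continuous cl := continuous_const.max (continuous_id.min continuous_const)
  set B : ℝ → Matrix (Fin d) (Fin d) ℝ := fun s => A (cl s) with hB_def
  -- bound on the norm of A over the compact interval
  obtain ⟨x₀, hx₀, hCmax⟩ := isCompact_Icc.exists_isMaxOn (Set.nonempty_Icc.mpr huw.le)
    ((hAcont.mono hsub).norm)
  have hC : ∀ y ∈ Set.Icc u w, ‖A y‖ ≤ ‖A x₀‖ := fun y hy => hCmax hy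
  set C : ℝ := ‖A x₀‖ with hC_def
  have hC0 : 0 ≤ C := norm_nonneg _
  have hBC : ∀ s, ‖B s‖ ≤ C := fun s => hC (cl s) (hcl_mem s)
  set K : NNReal := Real.toNNReal (2 * d * C) with hK_def
  have hKeq : (K : ℝ) = 2 * d * C := Real.coe_toNNReal _ (by positivity)
  set v : ℝ → Matrix (Fin d) (Fin d) ℝ → Matrix (Fin d) (Fin d) ℝ :=
    fun s X => B s * X - X * B s with hv_def
  have hlip : ∀ s, LipschitzWith K (v s) := by
    intro s
    refine LipschitzWith.of_dist_le_mul fun X Y => ?_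
    rw [dist_eq_norm, dist_eq_norm]
    have hdiff : v s X - v s Y = B s * (X - Y) - (X - Y) * B s := by
      simp only [hv_def]; noncomm_ring
    rw [hdiff, hKeq]
    calc ‖B s * (X - Y) - (X - Y) * B s‖
        ≤ ‖B s * (X - Y)‖ + ‖(X - Y) * B s‖ := norm_sub_le _ _
      _ ≤ d * ‖B s‖ * ‖X - Y‖ + d * ‖X - Y‖ * ‖B s‖ :=
          add_le_add (RotMom.norm_matmul_le _ _) (RotMom.norm_matmul_le _ _)
      _ ≤ d * C * ‖X - Y‖ + d * ‖X - Y‖ * C := by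
          refine add_le_add ?_ ?_
          · exact mul_le_mul_of_nonneg_right
              (mul_le_mul_of_nonneg_left (hBC s) (by positivity)) (norm_nonneg _)
          · exact mul_le_mul_of_nonneg_left (hBC s) (by positivity)
      _ = 2 * d * C * ‖X - Y‖ := by ring
  have hEq : Set.EqOn M (fun _ => (0 : Matrix (Fin d) (Fin d) ℝ)) (Set.Ioo u w) := by
    refine ODE_solution_unique_of_mem_Ioo
      (fun s _ => (hlip s).lipschitzOnWith (s := Set.univ)) (t₀ := t₀)
      ⟨hu0, hw0⟩ (fun s hs => ?_) (fun s hs => ?_) h0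
    · refine ⟨?_, trivial⟩
      have hs' : s ∈ Set.Icc u w := Set.Ioo_subset_Icc_self hs
      have : v s (M s) = A s * M s - M s * A s := by
        simp only [hv_def, hB_def, hcl_eq s hs']
      rw [this]
      exact hM s (hsub hs')
    · refine ⟨?_, trivial⟩
      have : v s 0 = 0 := by simp [hv_def]
      rw [this]
      exact hasDerivAt_const s 0
  exact hEq ⟨hu1, hw1⟩

end Main
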